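/- Let G be a finite subcubic class two graph and let f be a minimal colouring of G. Then for each conflicting edge e with regard to f, there exists a minimal conflicting subgraph of G which contains e and contains no other conflicting edge with regard to f. -/

import Mathlib

open SimpleGraph

variable {V : Type*}

/-- Two edges (of a graph) are adjacent if they are distinct and share a vertex. -/
def EdgesAdj (e₁ e₂ : Sym2 V) : Prop := e₁ ≠ e₂ ∧ ∃ v, v ∈ e₁ ∧ v ∈ e₂

/-- `f` is a proper edge colouring of `G`: adjacent edges of `G` get distinct colours. -/
def IsProperEC (G : SimpleGraph V) {α : Type*} (f : Sym2 V → α) : Prop :=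
  ∀ e₁ ∈ G.edgeSet, ∀ e₂ ∈ G.edgeSet, EdgesAdj e₁ e₂ → f e₁ ≠ f e₂

/-- `G` is 3-edge-colourable. -/
def ThreeEC (G : SimpleGraph V) : Prop := ∃ f : Sym2 V → Fin 3, IsProperEC G f

/-- The degree of a vertex. -/
noncomputable def deg (G : SimpleGraph V) (v : V) : ℕ := Nat.card (G.neighborSet v)

/-- Every vertex has degree at most 3. -/
def Subcubic (G : SimpleGraph V) : Prop := ∀ v, deg G v ≤ 3

/-- Every vertex has degree exactly 3. -/
def CubicGraph (G : SimpleGraph V) : Prop := ∀ v, deg G v = 3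

/-- The resistance of `G`: the minimum number of edges whose removal from `G`
yields a 3-edge-colourable graph. -/
noncomputable def resistance (G : SimpleGraph V) : ℕ :=
  sInf {n | ∃ R : Set (Sym2 V), R.ncard = n ∧ ThreeEC (G.deleteEdges R)}

/-- `M` is a minimal conflicting subgraph of `G`: a subgraph of `G` that is not
3-edge-colourable, but `M − e` is 3-edge-colourable for every edge `e` of `M`. -/
def MinConfl (G M : SimpleGraph V) : Prop :=
  M ≤ G ∧ ¬ ThreeEC M ∧ ∀ e ∈ M.edgeSet, ThreeEC (M.deleteEdges {e})

/-- `R` is a representative conflicting subset of `G`: a set of edges of `G`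
containing at least one edge from every minimal conflicting subgraph of `G`. -/
def RepConfl (G : SimpleGraph V) (R : Set (Sym2 V)) : Prop :=
  R ⊆ G.edgeSet ∧ ∀ M : SimpleGraph V, MinConfl G M → (R ∩ M.edgeSet).Nonempty

/-- A minimal colouring of `G`: a proper 4-edge-colouring (colour `0` playing the role
of the fourth colour) in which exactly `resistance G` edges of `G` receive colour `0`. -/
def IsMinimalColoring (G : SimpleGraph V) (f : Sym2 V → Fin 4) : Prop :=
  IsProperEC G f ∧ {e | e ∈ G.edgeSet ∧ f e = 0}.ncard = resistance G


lemma threeEC_mono {V : Type*} {G H : SimpleGraph V} (h : G.edgeSet ⊆ H.edgeSet)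
    (hH : ThreeEC H) : ThreeEC G := by
  obtain ⟨g, hg⟩ := hH
  exact ⟨g, fun e₁ h1 e₂ h2 hadj => hg e₁ (h h1) e₂ (h h2) hadj⟩

lemma exists_minConfl_le {V : Type*} [Finite V] (M : SimpleGraph V) (hM : ¬ ThreeEC M) :
    ∃ N : SimpleGraph V, N ≤ M ∧ ¬ ThreeEC N ∧
      ∀ e ∈ N.edgeSet, ThreeEC (N.deleteEdges {e}) := by
  generalize hn : M.edgeSet.ncard = n
  induction n using Nat.strong_induction_on generalizing M with
  | _ n ih =>
    by_cases hmin : ∀ e ∈ M.edgeSet, ThreeEC (M.deleteEdges {e})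
    · exact ⟨M, le_refl M, hM, hmin⟩
    · push_neg at hmin
      obtain ⟨a, ha, hna⟩ := hmin
      have hlt : (M.deleteEdges {a}).edgeSet.ncard < n := by
        rw [SimpleGraph.edgeSet_deleteEdges, ← hn]
        exact Set.ncard_lt_ncard (by
          constructor
          · exact Set.diff_subset
          · intro hsub
            exact (hsub ha).2 rfl) (Set.toFinite _)
      obtain ⟨N, hN1, hN2, hN3⟩ := ih _ hlt _ hna rfl
      exact ⟨N, le_trans hN1 (SimpleGraph.deleteEdges_le _), hN2, hN3⟩

/-- For a minimal colouring `f` of a finite subcubic class two graph `G`, each conflicting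
edge `e` lies in a minimal conflicting subgraph containing no other conflicting edge. -/
theorem stmt_2 {V : Type*} [Fintype V] (G : SimpleGraph V)
    (hsub : Subcubic G) (hclass2 : ¬ ThreeEC G)
    (f : Sym2 V → Fin 4) (hf : IsMinimalColoring G f)
    (e : Sym2 V) (he : e ∈ G.edgeSet) (he0 : f e = 0) :
    ∃ M : SimpleGraph V, MinConfl G M ∧ e ∈ M.edgeSet ∧
      ∀ e' ∈ M.edgeSet, f e' = 0 → e' = e := by
  classical
  set C : Set (Sym2 V) := {e' | e' ∈ G.edgeSet ∧ f e' = 0} with hC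
  have heC : e ∈ C := ⟨he, he0⟩
  -- deleting all conflicting edges gives a 3-edge-colourable graph
  have hGC : ThreeEC (G.deleteEdges C) := by
    refine ⟨fun a => ⟨(f a).val - 1, by have := (f a).isLt; omega⟩, ?_⟩
    intro e₁ h1 e₂ h2 hadj
    rw [SimpleGraph.edgeSet_deleteEdges] at h1 h2
    have hne : f e₁ ≠ f e₂ := hf.1 e₁ h1.1 e₂ h2.1 hadj
    have h10 : f e₁ ≠ 0 := fun h => h1.2 ⟨h1.1, h⟩
    have h20 : f e₂ ≠ 0 := fun h => h2.2 ⟨h2.1, h⟩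
    have v1 : (f e₁).val ≠ 0 := fun h => h10 (Fin.ext h)
    have v2 : (f e₂).val ≠ 0 := fun h => h20 (Fin.ext h)
    have vne : (f e₁).val ≠ (f e₂).val := fun h => hne (Fin.ext h)
    intro h
    have := congrArg Fin.val h
    simp only at this
    omega
  -- deleting all but e is not 3-edge-colourable
  have hne : ¬ ThreeEC (G.deleteEdges (C \ {e})) := by
    intro h3
    have hle : resistance G ≤ (C \ {e}).ncard :=
      Nat.sInf_le ⟨C \ {e}, rfl, h3⟩
    have h1 : (C \ {e}).ncard = C.ncard - 1 :=
      Set.ncard_diff_singleton_of_mem heC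
    have h2 : C.ncard = resistance G := hf.2
    have hpos : 0 < C.ncard := (Set.ncard_pos (Set.toFinite C)).mpr ⟨e, heC⟩
    omega
  obtain ⟨N, hN1, hN2, hN3⟩ := exists_minConfl_le _ hne
  have hNedge : N.edgeSet ⊆ G.edgeSet \ (C \ {e}) := by
    intro a ha
    have := SimpleGraph.edgeSet_mono hN1 ha
    rwa [SimpleGraph.edgeSet_deleteEdges] at this
  have heN : e ∈ N.edgeSet := by
    by_contra heN
    apply hN2
    apply threeEC_mono (H := G.deleteEdges C) ?_ hGC
    intro a ha
    rw [SimpleGraph.edgeSet_deleteEdges]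
    have h1 := hNedge ha
    refine ⟨h1.1, fun haC => h1.2 ⟨haC, ?_⟩⟩
    intro h
    exact heN (h ▸ ha)
  refine ⟨N, ⟨le_trans hN1 (SimpleGraph.deleteEdges_le _), hN2, hN3⟩, heN, ?_⟩
  intro e' he' hfe'
  have h1 := hNedge he'
  by_contra hneq
  exact h1.2 ⟨⟨h1.1, hfe'⟩, hneq⟩
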